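/- Every twin-distance-hereditary digraph G is distance-hereditary: for every induced subdigraph H of G and every two vertices u, v of H such that v is reachable from u in H, the directed distance from u to v in H equals the directed distance from u to v in G. -/
import Mathlib


/-- Arc relation of the induced subdigraph on a vertex set `S`. -/
def restrict (A : ℕ → ℕ → Prop) (S : Finset ℕ) : ℕ → ℕ → Prop :=
  fun x y => A x y ∧ x ∈ S ∧ y ∈ S

/-- `walkLen A n u v`: there is a directed walk of length `n` from `u` to `v`. -/
def walkLen (A : ℕ → ℕ → Prop) : ℕ → ℕ → ℕ → Prop
  | 0, u, v => u = v
  | n + 1, u, v => ∃ w, A u w ∧ walkLen A n w v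

/-- `v` is reachable from `u` by a directed walk. -/
def Reach (A : ℕ → ℕ → Prop) (u v : ℕ) : Prop :=
  ∃ n, walkLen A n u v

/-- Directed distance: length of a shortest directed walk (= shortest directed path). -/
noncomputable def ddist (A : ℕ → ℕ → Prop) (u v : ℕ) : ℕ :=
  sInf {n | walkLen A n u v}

/-- `x` and `y` are directed twins: `N⁻(x)\{y} = N⁻(y)\{x}` and `N⁺(x)\{y} = N⁺(y)\{x}`. -/
def DTwins (A : ℕ → ℕ → Prop) (x y : ℕ) : Prop :=
  x ≠ y ∧
    {w | A w x} \ {y} = {w | A w y} \ {x} ∧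
    {w | A x w} \ {y} = {w | A y w} \ {x}

/-- The arc relation obtained by adding a new vertex `u` as a directed twin of `v`;
`auv`, `avu` determine which of the arcs `(u,v)`, `(v,u)` are present (any of the
four adjacency patterns between the twins). -/
def twinArc (A : ℕ → ℕ → Prop) (v u : ℕ) (auv avu : Prop) : ℕ → ℕ → Prop :=
  fun x y => A x y ∨ (x = u ∧ y = v ∧ auv) ∨ (x = v ∧ y = u ∧ avu) ∨
    (x = u ∧ A v y) ∨ (y = u ∧ A x v)

/-- Directed co-graphs: single vertices, disjoint union, series and order composition. -/
inductive DCo : Finset ℕ → (ℕ → ℕ → Prop) → Prop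
  | single (v : ℕ) : DCo {v} (fun _ _ => False)
  | union {V₁ V₂ : Finset ℕ} {A₁ A₂ : ℕ → ℕ → Prop} :
      Disjoint V₁ V₂ → DCo V₁ A₁ → DCo V₂ A₂ →
      DCo (V₁ ∪ V₂) (fun x y => A₁ x y ∨ A₂ x y)
  | series {V₁ V₂ : Finset ℕ} {A₁ A₂ : ℕ → ℕ → Prop} :
      Disjoint V₁ V₂ → DCo V₁ A₁ → DCo V₂ A₂ →
      DCo (V₁ ∪ V₂)
        (fun x y => A₁ x y ∨ A₂ x y ∨ (x ∈ V₁ ∧ y ∈ V₂) ∨ (x ∈ V₂ ∧ y ∈ V₁))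
  | order {V₁ V₂ : Finset ℕ} {A₁ A₂ : ℕ → ℕ → Prop} :
      Disjoint V₁ V₂ → DCo V₁ A₁ → DCo V₂ A₂ →
      DCo (V₁ ∪ V₂) (fun x y => A₁ x y ∨ A₂ x y ∨ (x ∈ V₁ ∧ y ∈ V₂))

/-- Extended directed co-graphs: additionally closed under directed union. -/
inductive ExtDCo : Finset ℕ → (ℕ → ℕ → Prop) → Prop
  | single (v : ℕ) : ExtDCo {v} (fun _ _ => False)
  | union {V₁ V₂ : Finset ℕ} {A₁ A₂ : ℕ → ℕ → Prop} :
      Disjoint V₁ V₂ → ExtDCo V₁ A₁ → ExtDCo V₂ A₂ →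
      ExtDCo (V₁ ∪ V₂) (fun x y => A₁ x y ∨ A₂ x y)
  | series {V₁ V₂ : Finset ℕ} {A₁ A₂ : ℕ → ℕ → Prop} :
      Disjoint V₁ V₂ → ExtDCo V₁ A₁ → ExtDCo V₂ A₂ →
      ExtDCo (V₁ ∪ V₂)
        (fun x y => A₁ x y ∨ A₂ x y ∨ (x ∈ V₁ ∧ y ∈ V₂) ∨ (x ∈ V₂ ∧ y ∈ V₁))
  | order {V₁ V₂ : Finset ℕ} {A₁ A₂ : ℕ → ℕ → Prop} :
      Disjoint V₁ V₂ → ExtDCo V₁ A₁ → ExtDCo V₂ A₂ →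
      ExtDCo (V₁ ∪ V₂) (fun x y => A₁ x y ∨ A₂ x y ∨ (x ∈ V₁ ∧ y ∈ V₂))
  | dUnion {V₁ V₂ : Finset ℕ} {A₁ A₂ : ℕ → ℕ → Prop} (R : ℕ → ℕ → Prop) :
      Disjoint V₁ V₂ → ExtDCo V₁ A₁ → ExtDCo V₂ A₂ →
      ExtDCo (V₁ ∪ V₂) (fun x y => A₁ x y ∨ A₂ x y ∨ (x ∈ V₁ ∧ y ∈ V₂ ∧ R x y))

/-- Digraphs constructible from single vertices by disjoint union and adding directed twins. -/
inductive TwinBuilt : Finset ℕ → (ℕ → ℕ → Prop) → Prop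
  | single (v : ℕ) : TwinBuilt {v} (fun _ _ => False)
  | union {V₁ V₂ : Finset ℕ} {A₁ A₂ : ℕ → ℕ → Prop} :
      Disjoint V₁ V₂ → TwinBuilt V₁ A₁ → TwinBuilt V₂ A₂ →
      TwinBuilt (V₁ ∪ V₂) (fun x y => A₁ x y ∨ A₂ x y)
  | twin {V : Finset ℕ} {A : ℕ → ℕ → Prop} (v u : ℕ) (auv avu : Prop) :
      v ∈ V → u ∉ V → TwinBuilt V A →
      TwinBuilt (insert u V) (twinArc A v u auv avu)

/-- Twin-distance-hereditary digraphs: built from a single vertex by disjoint union,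
adding directed twins, and adding pendant plus / pendant minus vertices. -/
inductive TwinDH : Finset ℕ → (ℕ → ℕ → Prop) → Prop
  | single (v : ℕ) : TwinDH {v} (fun _ _ => False)
  | union {V₁ V₂ : Finset ℕ} {A₁ A₂ : ℕ → ℕ → Prop} :
      Disjoint V₁ V₂ → TwinDH V₁ A₁ → TwinDH V₂ A₂ →
      TwinDH (V₁ ∪ V₂) (fun x y => A₁ x y ∨ A₂ x y)
  | twin {V : Finset ℕ} {A : ℕ → ℕ → Prop} (v u : ℕ) (auv avu : Prop) :
      v ∈ V → u ∉ V → TwinDH V A →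
      TwinDH (insert u V) (twinArc A v u auv avu)
  | pendPlus {V : Finset ℕ} {A : ℕ → ℕ → Prop} (a u : ℕ) :
      a ∈ V → u ∉ V → TwinDH V A →
      TwinDH (insert u V) (fun x y => A x y ∨ (x = u ∧ y = a))
  | pendMinus {V : Finset ℕ} {A : ℕ → ℕ → Prop} (a u : ℕ) :
      a ∈ V → u ∉ V → TwinDH V A →
      TwinDH (insert u V) (fun x y => A x y ∨ (x = a ∧ y = u))

/-- Undirected distance-hereditary graphs, via the recursive characterization:
built from a single vertex by pendant vertices, false twins and true twins. -/
inductive UDH : Finset ℕ → (ℕ → ℕ → Prop) → Prop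
  | single (v : ℕ) : UDH {v} (fun _ _ => False)
  | pendant {V : Finset ℕ} {E : ℕ → ℕ → Prop} (a u : ℕ) :
      a ∈ V → u ∉ V → UDH V E →
      UDH (insert u V) (fun x y => E x y ∨ (x = u ∧ y = a) ∨ (x = a ∧ y = u))
  | falseTwin {V : Finset ℕ} {E : ℕ → ℕ → Prop} (v u : ℕ) :
      v ∈ V → u ∉ V → UDH V E →
      UDH (insert u V) (fun x y => E x y ∨ (x = u ∧ E v y) ∨ (y = u ∧ E x v))
  | trueTwin {V : Finset ℕ} {E : ℕ → ℕ → Prop} (v u : ℕ) :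
      v ∈ V → u ∉ V → UDH V E →
      UDH (insert u V)
        (fun x y => E x y ∨ (x = u ∧ E v y) ∨ (y = u ∧ E x v) ∨
          (x = u ∧ y = v) ∨ (x = v ∧ y = u))

/-- The induced subdigraph on `C` is strongly connected. -/
def StronglyConn (A : ℕ → ℕ → Prop) (C : Finset ℕ) : Prop :=
  ∀ u ∈ C, ∀ v ∈ C, Reach (restrict A C) u v

/-- `C` is a strong component of the digraph with vertex set `V` and arcs `A`. -/
def IsStrongComponent (A : ℕ → ℕ → Prop) (V C : Finset ℕ) : Prop :=
  C.Nonempty ∧ C ⊆ V ∧ StronglyConn A C ∧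
    ∀ D, C ⊆ D → D ⊆ V → StronglyConn A D → D = C

/-- The induced subdigraph on `S` is weakly connected. -/
def WeaklyConn (A : ℕ → ℕ → Prop) (S : Finset ℕ) : Prop :=
  S.Nonempty ∧ ∀ u ∈ S, ∀ v ∈ S,
    Relation.ReflTransGen (fun x y => restrict A S x y ∨ restrict A S y x) u v

/-- The induced subdigraph on `V` is acyclic. -/
def AcyclicOn (A : ℕ → ℕ → Prop) (V : Finset ℕ) : Prop :=
  ∀ v ∈ V, ∀ n, 0 < n → ¬ walkLen (restrict A V) n v v

/-- `CRle A V r`: the cycle rank of the digraph `(V, A)` is at most `r`.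
This is the standard recursive definition: acyclic digraphs have rank 0, digraphs
decompose into their strong components, and deleting a vertex decreases rank by
at most one. -/
inductive CRle (A : ℕ → ℕ → Prop) : Finset ℕ → ℕ → Prop
  | base {V : Finset ℕ} {r : ℕ} : AcyclicOn A V → CRle A V r
  | scc {V : Finset ℕ} {r : ℕ} :
      (∀ C, IsStrongComponent A V C → CRle A C r) → CRle A V r
  | step {V : Finset ℕ} {r : ℕ} (v : ℕ) :
      v ∈ V → CRle A (V.erase v) r → CRle A V (r + 1)

/-- The cycle rank of the digraph `(V, A)`. -/
noncomputable def cycleRank (A : ℕ → ℕ → Prop) (V : Finset ℕ) : ℕ :=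
  sInf {r | CRle A V r}

/-- `CW k V A f`: the `k`-labeled digraph with vertices `V`, arcs `A` and labeling `f`
is constructible by a directed clique-width `k`-expression. -/
inductive CW (k : ℕ) : Finset ℕ → (ℕ → ℕ → Prop) → (ℕ → Fin k) → Prop
  | vertex (v : ℕ) (a : Fin k) : CW k {v} (fun _ _ => False) (fun _ => a)
  | union {V₁ V₂ : Finset ℕ} {A₁ A₂ : ℕ → ℕ → Prop} {f₁ f₂ : ℕ → Fin k} :
      Disjoint V₁ V₂ → CW k V₁ A₁ f₁ → CW k V₂ A₂ f₂ →
      CW k (V₁ ∪ V₂) (fun x y => A₁ x y ∨ A₂ x y)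
        (fun x => if x ∈ V₁ then f₁ x else f₂ x)
  | addArcs {V : Finset ℕ} {A : ℕ → ℕ → Prop} {f : ℕ → Fin k} (a b : Fin k) :
      a ≠ b → CW k V A f →
      CW k V (fun x y => A x y ∨ (x ∈ V ∧ y ∈ V ∧ f x = a ∧ f y = b)) f
  | relabel {V : Finset ℕ} {A : ℕ → ℕ → Prop} {f : ℕ → Fin k} (a b : Fin k) :
      CW k V A f →
      CW k V A (fun x => if f x = a then b else f x)

section AuxWalk

variable {R R' : ℕ → ℕ → Prop}

lemma walkLen_mono (h : ∀ a b, R a b → R' a b) :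
    ∀ n x y, walkLen R n x y → walkLen R' n x y := by
  intro n
  induction n with
  | zero => intro x y hw; exact hw
  | succ n ih =>
      intro x y hw
      obtain ⟨w, ha, hw⟩ := hw
      exact ⟨w, h _ _ ha, ih w y hw⟩

lemma walkLen_pos {n x y : ℕ} (hw : walkLen R n x y) (hxy : x ≠ y) : 1 ≤ n := by
  cases n with
  | zero => exact absurd hw hxy
  | succ n => exact Nat.succ_le_succ (Nat.zero_le n)

lemma walkLen_snoc : ∀ n x y z, walkLen R n x y → R y z → walkLen R (n + 1) x z := by
  intro n
  induction n with
  | zero =>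
      intro x y z hw ha
      have : x = y := hw
      subst this
      exact ⟨z, ha, rfl⟩
  | succ n ih =>
      intro x y z hw ha
      obtain ⟨w, ha0, hw⟩ := hw
      exact ⟨w, ha0, ih w y z hw ha⟩

lemma walkLen_last : ∀ n x z, walkLen R (n + 1) x z → ∃ y, walkLen R n x y ∧ R y z := by
  intro n
  induction n with
  | zero =>
      intro x z hw
      obtain ⟨w, ha, hw⟩ := hw
      have : w = z := hw
      subst this
      exact ⟨x, rfl, ha⟩
  | succ n ih =>
      intro x z hw
      obtain ⟨w, ha, hw⟩ := hw
      obtain ⟨y, h1, h2⟩ := ih w z hw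
      exact ⟨y, ⟨w, ha, h1⟩, h2⟩

lemma walk_endMem {V : Finset ℕ} (m1 : ∀ x y, R x y → x ∈ V ∧ y ∈ V) :
    ∀ n x y, walkLen R n x y → x ∈ V → y ∈ V := by
  intro n
  induction n with
  | zero => intro x y hw hx; exact hw ▸ hx
  | succ n ih =>
      intro x y hw hx
      obtain ⟨w, ha, hw⟩ := hw
      exact ih w y hw (m1 _ _ ha).2

end AuxWalk

lemma TwinDH.memV {V : Finset ℕ} {A : ℕ → ℕ → Prop} (h : TwinDH V A) :
    ∀ x y, A x y → x ∈ V ∧ y ∈ V := by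
  induction h with
  | single v => intro x y hxy; exact hxy.elim
  | union hd h1 h2 ih1 ih2 =>
      intro x y hxy
      rcases hxy with h | h
      · exact ⟨Finset.mem_union_left _ (ih1 _ _ h).1, Finset.mem_union_left _ (ih1 _ _ h).2⟩
      · exact ⟨Finset.mem_union_right _ (ih2 _ _ h).1, Finset.mem_union_right _ (ih2 _ _ h).2⟩
  | twin v u auv avu hv hu hp ih =>
      intro x y hxy
      rcases hxy with h | ⟨rfl, rfl, -⟩ | ⟨rfl, rfl, -⟩ | ⟨rfl, h⟩ | ⟨rfl, h⟩
      · exact ⟨Finset.mem_insert_of_mem (ih _ _ h).1, Finset.mem_insert_of_mem (ih _ _ h).2⟩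
      · exact ⟨Finset.mem_insert_self _ _, Finset.mem_insert_of_mem hv⟩
      · exact ⟨Finset.mem_insert_of_mem hv, Finset.mem_insert_self _ _⟩
      · exact ⟨Finset.mem_insert_self _ _, Finset.mem_insert_of_mem (ih _ _ h).2⟩
      · exact ⟨Finset.mem_insert_of_mem (ih _ _ h).1, Finset.mem_insert_self _ _⟩
  | pendPlus a u ha hu hp ih =>
      intro x y hxy
      rcases hxy with h | ⟨rfl, rfl⟩
      · exact ⟨Finset.mem_insert_of_mem (ih _ _ h).1, Finset.mem_insert_of_mem (ih _ _ h).2⟩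
      · exact ⟨Finset.mem_insert_self _ _, Finset.mem_insert_of_mem ha⟩
  | pendMinus a u ha hu hp ih =>
      intro x y hxy
      rcases hxy with h | ⟨rfl, rfl⟩
      · exact ⟨Finset.mem_insert_of_mem (ih _ _ h).1, Finset.mem_insert_of_mem (ih _ _ h).2⟩
      · exact ⟨Finset.mem_insert_of_mem ha, Finset.mem_insert_self _ _⟩

lemma TwinDH.notRefl {V : Finset ℕ} {A : ℕ → ℕ → Prop} (h : TwinDH V A) :
    ∀ x, ¬ A x x := by
  induction h with
  | single v => intro x hx; exact hx
  | union hd h1 h2 ih1 ih2 =>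
      intro x hx
      rcases hx with h | h
      · exact ih1 x h
      · exact ih2 x h
  | twin v u auv avu hv hu hp ih =>
      intro x hx
      rcases hx with h | ⟨rfl, h2, -⟩ | ⟨rfl, h2, -⟩ | ⟨rfl, h⟩ | ⟨rfl, h⟩
      · exact ih x h
      · exact hu (by rw [h2]; exact hv)
      · exact hu (by rw [← h2]; exact hv)
      · exact hu (TwinDH.memV hp _ _ h).2
      · exact hu (TwinDH.memV hp _ _ h).1
  | pendPlus a u ha hu hp ih =>
      intro x hx
      rcases hx with h | ⟨rfl, h2⟩
      · exact ih x h
      · exact hu (by rw [h2]; exact ha)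
  | pendMinus a u ha hu hp ih =>
      intro x hx
      rcases hx with h | ⟨rfl, h2⟩
      · exact ih x h
      · exact hu (by rw [← h2]; exact ha)

set_option linter.unusedSectionVars false

section TwinArc

variable {A : ℕ → ℕ → Prop} {u v : ℕ} {auv avu : Prop}
variable (hAu : ∀ z, ¬ A u z) (hAu' : ∀ z, ¬ A z u) (hirr : ∀ z, ¬ A z z) (huv : u ≠ v)

include hAu hAu' hirr huv

lemma tw_uOut {w : ℕ} (h : twinArc A v u auv avu u w) :
    (w = v ∧ auv) ∨ (A v w ∧ w ≠ u ∧ w ≠ v) := by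
  rcases h with h | ⟨-, rfl, h3⟩ | ⟨h1, -, -⟩ | ⟨-, h⟩ | ⟨rfl, h⟩
  · exact absurd h (hAu _)
  · exact Or.inl ⟨rfl, h3⟩
  · exact absurd h1 huv
  · exact Or.inr ⟨h, fun e => hAu' _ (e ▸ h), fun e => hirr _ (e ▸ h)⟩
  · exact absurd h (hAu _)

lemma tw_uIn {p : ℕ} (h : twinArc A v u auv avu p u) :
    (p = v ∧ avu) ∨ (A p v ∧ p ≠ u ∧ p ≠ v) := by
  rcases h with h | ⟨-, h2, -⟩ | ⟨rfl, -, h3⟩ | ⟨rfl, h⟩ | ⟨-, h⟩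
  · exact absurd h (hAu' _)
  · exact absurd h2 huv
  · exact Or.inl ⟨rfl, h3⟩
  · exact absurd h (hAu' _)
  · exact Or.inr ⟨h, fun e => hAu _ (e ▸ h), fun e => hirr _ (e ▸ h)⟩

lemma tw_uv (h : twinArc A v u auv avu u v) : auv := by
  rcases h with h | ⟨-, -, h3⟩ | ⟨h1, -, -⟩ | ⟨-, h⟩ | ⟨h1, -⟩
  · exact absurd h (hAu _)
  · exact h3
  · exact absurd h1 huv
  · exact absurd h (hirr _)
  · exact absurd h1.symm huv

lemma tw_vu (h : twinArc A v u auv avu v u) : avu := by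
  rcases h with h | ⟨h1, -, -⟩ | ⟨-, -, h3⟩ | ⟨h1, -⟩ | ⟨-, h⟩
  · exact absurd h (hAu' _)
  · exact absurd h1.symm huv
  · exact h3
  · exact absurd h1.symm huv
  · exact absurd h (hirr _)

lemma tw_vOut {w : ℕ} (h : twinArc A v u auv avu v w) (hwu : w ≠ u) : A v w := by
  rcases h with h | ⟨h1, -, -⟩ | ⟨-, h2, -⟩ | ⟨h1, -⟩ | ⟨h2, -⟩
  · exact h
  · exact absurd h1.symm huv
  · exact absurd h2 hwu
  · exact absurd h1.symm huv
  · exact absurd h2 hwu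

lemma tw_vIn {p : ℕ} (h : twinArc A v u auv avu p v) (hpu : p ≠ u) : A p v := by
  rcases h with h | ⟨h1, -, -⟩ | ⟨-, h2, -⟩ | ⟨h1, -⟩ | ⟨h2, -⟩
  · exact h
  · exact absurd h1 hpu
  · exact absurd h2.symm huv
  · exact absurd h1 hpu
  · exact absurd h2.symm huv

lemma tw_nonU {p q : ℕ} (h : twinArc A v u auv avu p q) (hpu : p ≠ u) (hqu : q ≠ u) :
    A p q := by
  rcases h with h | ⟨h1, -, -⟩ | ⟨-, h2, -⟩ | ⟨h1, -⟩ | ⟨h2, -⟩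
  · exact h
  · exact absurd h1 hpu
  · exact absurd h2 hqu
  · exact absurd h1 hpu
  · exact absurd h2 hqu

lemma tw_F1 {p q : ℕ} (h : twinArc A v u auv avu p q) :
    (p = u ∧ q = v) ∨ (p = v ∧ q = u) ∨
      A (if p = u then v else p) (if q = u then v else q) := by
  rcases h with h | ⟨h1, h2, -⟩ | ⟨h1, h2, -⟩ | ⟨h1, h⟩ | ⟨h2, h⟩
  · have hp : p ≠ u := fun e => hAu _ (e ▸ h)
    have hq : q ≠ u := fun e => hAu' _ (e ▸ h)
    exact Or.inr (Or.inr (by rw [if_neg hp, if_neg hq]; exact h))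
  · exact Or.inl ⟨h1, h2⟩
  · exact Or.inr (Or.inl ⟨h1, h2⟩)
  · have hq : q ≠ u := fun e => hAu' _ (e ▸ h)
    exact Or.inr (Or.inr (by rw [if_pos h1, if_neg hq]; exact h))
  · have hp : p ≠ u := fun e => hAu _ (e ▸ h)
    exact Or.inr (Or.inr (by rw [if_neg hp, if_pos h2]; exact h))

lemma tw_collapse :
    ∀ n x y, walkLen (twinArc A v u auv avu) n x y →
      ∃ m, m ≤ n ∧ walkLen A m (if x = u then v else x) (if y = u then v else y) := by
  intro n
  induction n with
  | zero =>
      intro x y hw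
      have : x = y := hw
      subst this
      exact ⟨0, le_refl 0, rfl⟩
  | succ n ih =>
      intro x y hw
      obtain ⟨w, ha, hw⟩ := hw
      obtain ⟨m, hm, hwm⟩ := ih w y hw
      rcases tw_F1 hAu hAu' hirr huv ha with ⟨rfl, rfl⟩ | ⟨rfl, rfl⟩ | hA
      · refine ⟨m, Nat.le_succ_of_le hm, ?_⟩
        rw [if_pos rfl]
        rw [if_neg (Ne.symm huv)] at hwm
        exact hwm
      · refine ⟨m, Nat.le_succ_of_le hm, ?_⟩
        rw [if_neg (Ne.symm huv)]
        rw [if_pos rfl] at hwm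
        exact hwm
      · exact ⟨m + 1, Nat.succ_le_succ hm, ⟨_, hA, hwm⟩⟩

lemma tw_collapse' {S : Finset ℕ} :
    ∀ n x y, walkLen (restrict (twinArc A v u auv avu) S) n x y →
      ∃ m, m ≤ n ∧ walkLen (restrict A (insert v (S.erase u))) m
        (if x = u then v else x) (if y = u then v else y) := by
  intro n
  induction n with
  | zero =>
      intro x y hw
      have : x = y := hw
      subst this
      exact ⟨0, le_refl 0, rfl⟩
  | succ n ih =>
      intro x y hw
      obtain ⟨w, ⟨ha, hxS, hwS⟩, hw⟩ := hw
      obtain ⟨m, hm, hwm⟩ := ih w y hw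
      have hmem : ∀ z, z ∈ S → (if z = u then v else z) ∈ insert v (S.erase u) := by
        intro z hz
        by_cases hzu : z = u
        · rw [if_pos hzu]; exact Finset.mem_insert_self _ _
        · rw [if_neg hzu]; exact Finset.mem_insert_of_mem (Finset.mem_erase.mpr ⟨hzu, hz⟩)
      rcases tw_F1 hAu hAu' hirr huv ha with ⟨rfl, rfl⟩ | ⟨rfl, rfl⟩ | hA
      · refine ⟨m, Nat.le_succ_of_le hm, ?_⟩
        rw [if_pos rfl]
        rw [if_neg (Ne.symm huv)] at hwm
        exact hwm
      · refine ⟨m, Nat.le_succ_of_le hm, ?_⟩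
        rw [if_neg (Ne.symm huv)]
        rw [if_pos rfl] at hwm
        exact hwm
      · exact ⟨m + 1, Nat.succ_le_succ hm, ⟨_, ⟨hA, hmem _ hxS, hmem _ hwS⟩, hwm⟩⟩

end TwinArc

section UnionHelpers

variable {V₁ V₂ : Finset ℕ} {A₁ A₂ : ℕ → ℕ → Prop} {S : Finset ℕ}

lemma union_walkA_left (hd : Disjoint V₁ V₂)
    (m1 : ∀ x y, A₁ x y → x ∈ V₁ ∧ y ∈ V₁) (m2 : ∀ x y, A₂ x y → x ∈ V₂ ∧ y ∈ V₂) :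
    ∀ n p q, p ∈ V₁ → walkLen (fun x y => A₁ x y ∨ A₂ x y) n p q → walkLen A₁ n p q := by
  intro n
  induction n with
  | zero => intro p q _ h; exact h
  | succ n ih =>
      intro p q hp h
      obtain ⟨w, hA, hw⟩ := h
      have hA1 : A₁ p w := by
        rcases hA with h | h
        · exact h
        · exact absurd (m2 _ _ h).1 (Finset.disjoint_left.mp hd hp)
      exact ⟨w, hA1, ih w q (m1 _ _ hA1).2 hw⟩

lemma union_walkA_right (hd : Disjoint V₁ V₂)
    (m1 : ∀ x y, A₁ x y → x ∈ V₁ ∧ y ∈ V₁) (m2 : ∀ x y, A₂ x y → x ∈ V₂ ∧ y ∈ V₂) :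
    ∀ n p q, p ∈ V₂ → walkLen (fun x y => A₁ x y ∨ A₂ x y) n p q → walkLen A₂ n p q := by
  intro n
  induction n with
  | zero => intro p q _ h; exact h
  | succ n ih =>
      intro p q hp h
      obtain ⟨w, hA, hw⟩ := h
      have hA2 : A₂ p w := by
        rcases hA with h | h
        · exact absurd (m1 _ _ h).1 (Finset.disjoint_right.mp hd hp)
        · exact h
      exact ⟨w, hA2, ih w q (m2 _ _ hA2).2 hw⟩

lemma union_walk_left (hd : Disjoint V₁ V₂)
    (m1 : ∀ x y, A₁ x y → x ∈ V₁ ∧ y ∈ V₁) (m2 : ∀ x y, A₂ x y → x ∈ V₂ ∧ y ∈ V₂) :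
    ∀ n p q, p ∈ V₁ → walkLen (restrict (fun x y => A₁ x y ∨ A₂ x y) S) n p q →
      walkLen (restrict A₁ (S ∩ V₁)) n p q := by
  intro n
  induction n with
  | zero => intro p q _ h; exact h
  | succ n ih =>
      intro p q hp h
      obtain ⟨w, ⟨hA, hpS, hwS⟩, hw⟩ := h
      have hA1 : A₁ p w := by
        rcases hA with h | h
        · exact h
        · exact absurd (m2 _ _ h).1 (Finset.disjoint_left.mp hd hp)
      have hwV : w ∈ V₁ := (m1 _ _ hA1).2
      exact ⟨w, ⟨hA1, Finset.mem_inter.mpr ⟨hpS, hp⟩, Finset.mem_inter.mpr ⟨hwS, hwV⟩⟩,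
        ih w q hwV hw⟩

lemma union_walk_right (hd : Disjoint V₁ V₂)
    (m1 : ∀ x y, A₁ x y → x ∈ V₁ ∧ y ∈ V₁) (m2 : ∀ x y, A₂ x y → x ∈ V₂ ∧ y ∈ V₂) :
    ∀ n p q, p ∈ V₂ → walkLen (restrict (fun x y => A₁ x y ∨ A₂ x y) S) n p q →
      walkLen (restrict A₂ (S ∩ V₂)) n p q := by
  intro n
  induction n with
  | zero => intro p q _ h; exact h
  | succ n ih =>
      intro p q hp h
      obtain ⟨w, ⟨hA, hpS, hwS⟩, hw⟩ := h
      have hA2 : A₂ p w := by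
        rcases hA with h | h
        · exact absurd (m1 _ _ h).1 (Finset.disjoint_right.mp hd hp)
        · exact h
      have hwV : w ∈ V₂ := (m2 _ _ hA2).2
      exact ⟨w, ⟨hA2, Finset.mem_inter.mpr ⟨hpS, hp⟩, Finset.mem_inter.mpr ⟨hwS, hwV⟩⟩,
        ih w q hwV hw⟩

end UnionHelpers

section PendHelpers

variable {V : Finset ℕ} {A : ℕ → ℕ → Prop} {a u : ℕ} {S : Finset ℕ}
variable (ha : a ∈ V) (hu : u ∉ V) (mV : ∀ x y, A x y → x ∈ V ∧ y ∈ V)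

include ha hu mV

-- pendant plus: arcs A x y ∨ (x = u ∧ y = a); u has no in-arc
lemma pp_endU : ∀ n p, walkLen (fun x y => A x y ∨ (x = u ∧ y = a)) n p u → n = 0 := by
  intro n
  induction n with
  | zero => intro p _; rfl
  | succ n ih =>
      intro p h
      obtain ⟨w, hA, hw⟩ := h
      have hn := ih w hw
      rw [hn] at hw
      have : w = u := hw
      subst this
      rcases hA with h | ⟨-, h2⟩
      · exact absurd (mV _ _ h).2 hu
      · exact absurd (h2 ▸ ha) hu

lemma pp_strip : ∀ n p q, p ≠ u → walkLen (fun x y => A x y ∨ (x = u ∧ y = a)) n p q →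
    walkLen A n p q := by
  intro n
  induction n with
  | zero => intro p q _ h; exact h
  | succ n ih =>
      intro p q hp h
      obtain ⟨w, hA, hw⟩ := h
      have hA' : A p w := by
        rcases hA with h | ⟨h1, -⟩
        · exact h
        · exact absurd h1 hp
      have hwu : w ≠ u := fun e => hu (e ▸ (mV _ _ hA').2)
      exact ⟨w, hA', ih w q hwu hw⟩

lemma pp_strip' : ∀ n p q, p ≠ u →
    walkLen (restrict (fun x y => A x y ∨ (x = u ∧ y = a)) S) n p q →
    walkLen (restrict A (S.erase u)) n p q := by
  intro n
  induction n with
  | zero => intro p q _ h; exact h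
  | succ n ih =>
      intro p q hp h
      obtain ⟨w, ⟨hA, hpS, hwS⟩, hw⟩ := h
      have hA' : A p w := by
        rcases hA with h | ⟨h1, -⟩
        · exact h
        · exact absurd h1 hp
      have hwu : w ≠ u := fun e => hu (e ▸ (mV _ _ hA').2)
      exact ⟨w, ⟨hA', Finset.mem_erase.mpr ⟨hp, hpS⟩, Finset.mem_erase.mpr ⟨hwu, hwS⟩⟩,
        ih w q hwu hw⟩

-- pendant minus: arcs A x y ∨ (x = a ∧ y = u); u has no out-arc
lemma pm_noOut : ∀ w, ¬ (A u w ∨ (u = a ∧ w = u)) := by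
  intro w h
  rcases h with h | ⟨h1, -⟩
  · exact hu (mV _ _ h).1
  · exact hu (h1 ▸ ha)

lemma pm_strip : ∀ n p q, p ≠ u → q ≠ u →
    walkLen (fun x y => A x y ∨ (x = a ∧ y = u)) n p q → walkLen A n p q := by
  intro n
  induction n with
  | zero => intro p q _ _ h; exact h
  | succ n ih =>
      intro p q hp hq h
      obtain ⟨w, hA, hw⟩ := h
      rcases hA with h | ⟨-, h2⟩
      · have hwu : w ≠ u := fun e => hu (e ▸ (mV _ _ h).2)
        exact ⟨w, h, ih w q hwu hq hw⟩
      · subst h2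
        cases n with
        | zero => exact absurd (show _ = q from hw).symm hq
        | succ n =>
            obtain ⟨w2, hA2, -⟩ := hw
            exact absurd hA2 (pm_noOut ha hu mV w2)

lemma pm_strip' : ∀ n p q, p ≠ u → q ≠ u →
    walkLen (restrict (fun x y => A x y ∨ (x = a ∧ y = u)) S) n p q →
    walkLen (restrict A (S.erase u)) n p q := by
  intro n
  induction n with
  | zero => intro p q _ _ h; exact h
  | succ n ih =>
      intro p q hp hq h
      obtain ⟨w, ⟨hA, hpS, hwS⟩, hw⟩ := h
      rcases hA with h | ⟨-, h2⟩
      · have hwu : w ≠ u := fun e => hu (e ▸ (mV _ _ h).2)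
        exact ⟨w, ⟨h, Finset.mem_erase.mpr ⟨hp, hpS⟩, Finset.mem_erase.mpr ⟨hwu, hwS⟩⟩,
          ih w q hwu hq hw⟩
      · subst h2
        cases n with
        | zero => exact absurd (show _ = q from hw).symm hq
        | succ n =>
            obtain ⟨w2, hA2, -⟩ := hw
            exact absurd hA2.1 (pm_noOut ha hu mV w2)

end PendHelpers

set_option maxHeartbeats 1000000 in
lemma twoCycle {V : Finset ℕ} {A : ℕ → ℕ → Prop} (h : TwinDH V A) :
    ∀ S : Finset ℕ, S ⊆ V → ∀ w k, 1 ≤ k → walkLen (restrict A S) k w w →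
      ∃ z, restrict A S w z ∧ restrict A S z w := by
  induction h with
  | single p =>
      intro S hS w k hk hw
      cases k with
      | zero => omega
      | succ k =>
          obtain ⟨w1, ha, -⟩ := hw
          exact ha.1.elim
  | @union V₁ V₂ A₁ A₂ hd h1 h2 ih1 ih2 =>
      intro S hS w k hk hw
      have hw' := hw
      cases k with
      | zero => omega
      | succ k =>
          obtain ⟨w1, ha, -⟩ := hw'
          have hwS : w ∈ S := ha.2.1
          rcases Finset.mem_union.mp (hS hwS) with hw1 | hw2
          · have hconv := union_walk_left hd (TwinDH.memV h1) (TwinDH.memV h2) (k+1) w w hw1 hw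
            obtain ⟨z, c1, c2⟩ := ih1 (S ∩ V₁) Finset.inter_subset_right w (k+1)
              (Nat.succ_le_succ (Nat.zero_le _)) hconv
            exact ⟨z, ⟨Or.inl c1.1, (Finset.mem_inter.mp c1.2.1).1, (Finset.mem_inter.mp c1.2.2).1⟩,
                    ⟨Or.inl c2.1, (Finset.mem_inter.mp c2.2.1).1, (Finset.mem_inter.mp c2.2.2).1⟩⟩
          · have hconv := union_walk_right hd (TwinDH.memV h1) (TwinDH.memV h2) (k+1) w w hw2 hw
            obtain ⟨z, c1, c2⟩ := ih2 (S ∩ V₂) Finset.inter_subset_right w (k+1)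
              (Nat.succ_le_succ (Nat.zero_le _)) hconv
            exact ⟨z, ⟨Or.inr c1.1, (Finset.mem_inter.mp c1.2.1).1, (Finset.mem_inter.mp c1.2.2).1⟩,
                    ⟨Or.inr c2.1, (Finset.mem_inter.mp c2.2.1).1, (Finset.mem_inter.mp c2.2.2).1⟩⟩
  | @pendPlus VV AA a u ha hu hp ih =>
      intro S hS w k hk hw
      have hsub : S.erase u ⊆ VV := by
        intro z hz
        have hz' := Finset.mem_erase.mp hz
        rcases Finset.mem_insert.mp (hS hz'.2) with h | h
        · exact absurd h hz'.1
        · exact h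
      by_cases hwu : w = u
      · rw [hwu] at hw
        have hw' := walkLen_mono (fun p q hab => hab.1) k u u hw
        have := pp_endU ha hu (TwinDH.memV hp) k u hw'
        omega
      · have hw' := pp_strip' ha hu (TwinDH.memV hp) k w w hwu hw
        obtain ⟨z, c1, c2⟩ := ih (S.erase u) hsub w k hk hw'
        exact ⟨z, ⟨Or.inl c1.1, (Finset.mem_erase.mp c1.2.1).2, (Finset.mem_erase.mp c1.2.2).2⟩,
                ⟨Or.inl c2.1, (Finset.mem_erase.mp c2.2.1).2, (Finset.mem_erase.mp c2.2.2).2⟩⟩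
  | @pendMinus VV AA a u ha hu hp ih =>
      intro S hS w k hk hw
      have hsub : S.erase u ⊆ VV := by
        intro z hz
        have hz' := Finset.mem_erase.mp hz
        rcases Finset.mem_insert.mp (hS hz'.2) with h | h
        · exact absurd h hz'.1
        · exact h
      by_cases hwu : w = u
      · rw [hwu] at hw
        cases k with
        | zero => omega
        | succ k =>
            obtain ⟨w1, ha1, -⟩ := hw
            exact absurd ha1.1 (pm_noOut ha hu (TwinDH.memV hp) w1)
      · have hw' := pm_strip' ha hu (TwinDH.memV hp) k w w hwu hwu hw
        obtain ⟨z, c1, c2⟩ := ih (S.erase u) hsub w k hk hw'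
        exact ⟨z, ⟨Or.inl c1.1, (Finset.mem_erase.mp c1.2.1).2, (Finset.mem_erase.mp c1.2.2).2⟩,
                ⟨Or.inl c2.1, (Finset.mem_erase.mp c2.2.1).2, (Finset.mem_erase.mp c2.2.2).2⟩⟩
  | @twin VV AA v u auv avu hv hu hp ih =>
      intro S hS w k hk hw
      have mV := TwinDH.memV hp
      have hAu : ∀ z, ¬ AA u z := fun z hz => hu (mV _ _ hz).1
      have hAu' : ∀ z, ¬ AA z u := fun z hz => hu (mV _ _ hz).2
      have hirr := TwinDH.notRefl hp
      have huv : u ≠ v := fun e => hu (by rw [e]; exact hv)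
      by_cases huS : u ∈ S
      · have hS' : insert v (S.erase u) ⊆ VV := by
          intro z hz
          rcases Finset.mem_insert.mp hz with h | h
          · rw [h]; exact hv
          · have hz' := Finset.mem_erase.mp h
            rcases Finset.mem_insert.mp (hS hz'.2) with h2 | h2
            · exact absurd h2 hz'.1
            · exact h2
        have memS' : ∀ z, z ∈ S → z ≠ u → z ∈ insert v (S.erase u) := fun z hz hzu =>
          Finset.mem_insert_of_mem (Finset.mem_erase.mpr ⟨hzu, hz⟩)
        have hvS' : v ∈ insert v (S.erase u) := Finset.mem_insert_self _ _
        have pullW : ∀ c, c ∈ S → c ≠ u → ∀ m, walkLen (restrict AA (insert v (S.erase u))) (m+1) c c →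
            ∃ z, restrict (twinArc AA v u auv avu) S c z ∧ restrict (twinArc AA v u auv avu) S z c := by
          intro c hcS hcu m hwm
          obtain ⟨z, c1, c2⟩ := ih (insert v (S.erase u)) hS' c (m+1)
            (Nat.succ_le_succ (Nat.zero_le _)) hwm
          by_cases hzS : z ∈ S
          · exact ⟨z, ⟨Or.inl c1.1, hcS, hzS⟩, ⟨Or.inl c2.1, hzS, hcS⟩⟩
          · have hzv : z = v := by
              rcases Finset.mem_insert.mp c1.2.2 with h | h
              · exact h
              · exact absurd (Finset.mem_erase.mp h).2 hzS
            subst hzv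
            exact ⟨u, ⟨Or.inr (Or.inr (Or.inr (Or.inr ⟨rfl, c1.1⟩))), hcS, huS⟩,
                    ⟨Or.inr (Or.inr (Or.inr (Or.inl ⟨rfl, c2.1⟩))), huS, hcS⟩⟩
        have pullU : ∀ m, walkLen (restrict AA (insert v (S.erase u))) (m+1) v v →
            ∃ z, restrict (twinArc AA v u auv avu) S u z ∧ restrict (twinArc AA v u auv avu) S z u := by
          intro m hwm
          obtain ⟨z, c1, c2⟩ := ih (insert v (S.erase u)) hS' v (m+1)
            (Nat.succ_le_succ (Nat.zero_le _)) hwm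
          have hzv : z ≠ v := fun e => hirr v (e ▸ c1.1)
          have hzS : z ∈ S := by
            rcases Finset.mem_insert.mp c1.2.2 with h | h
            · exact absurd h hzv
            · exact (Finset.mem_erase.mp h).2
          exact ⟨z, ⟨Or.inr (Or.inr (Or.inr (Or.inl ⟨rfl, c1.1⟩))), huS, hzS⟩,
                  ⟨Or.inr (Or.inr (Or.inr (Or.inr ⟨rfl, c2.1⟩))), hzS, huS⟩⟩
        obtain ⟨k', rfl⟩ : ∃ k', k = k' + 1 := ⟨k - 1, by omega⟩
        obtain ⟨w1, ⟨haA, hwS, hw1S⟩, ht1⟩ := hw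
        have coll := fun n x y hxy => tw_collapse' (auv := auv) (avu := avu) hAu hAu' hirr huv (S := S) n x y hxy
        by_cases hwu : w = u
        · rw [hwu] at haA hwS ht1 ⊢
          rcases tw_uOut hAu hAu' hirr huv haA with ⟨he, hauv⟩ | ⟨hA1, hw1u, hw1v⟩
          · rw [he] at ht1 hw1S
            have hk' : 1 ≤ k' := walkLen_pos ht1 (Ne.symm huv)
            obtain ⟨k'', rfl⟩ : ∃ k'', k' = k'' + 1 := ⟨k' - 1, by omega⟩
            obtain ⟨w2, ha2, ht2⟩ := ht1
            by_cases hw2u : w2 = u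
            · rw [hw2u] at ha2
              exact ⟨v, ⟨Or.inr (Or.inl ⟨rfl, rfl, hauv⟩), hwS, hw1S⟩, ha2⟩
            · have hA2 : AA v w2 := tw_vOut hAu hAu' hirr huv ha2.1 hw2u
              obtain ⟨m, hm, hwm⟩ := coll k'' w2 u ht2
              rw [if_neg hw2u, if_pos rfl] at hwm
              exact pullU m ⟨w2, ⟨hA2, hvS', memS' w2 ha2.2.2 hw2u⟩, hwm⟩
          · obtain ⟨m, hm, hwm⟩ := coll k' w1 u ht1
            rw [if_neg hw1u, if_pos rfl] at hwm
            exact pullU m ⟨w1, ⟨hA1, hvS', memS' w1 hw1S hw1u⟩, hwm⟩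
        · by_cases hwv : w = v
          · rw [hwv] at haA hwS ht1 ⊢
            by_cases hw1u : w1 = u
            · rw [hw1u] at haA hw1S ht1
              have hk' : 1 ≤ k' := walkLen_pos ht1 huv
              obtain ⟨k'', rfl⟩ : ∃ k'', k' = k'' + 1 := ⟨k' - 1, by omega⟩
              obtain ⟨w2, ha2, ht2⟩ := ht1
              rcases tw_uOut hAu hAu' hirr huv ha2.1 with ⟨-, hauv⟩ | ⟨hA2, hw2u, hw2v⟩
              · exact ⟨u, ⟨haA, hwS, hw1S⟩, ⟨Or.inr (Or.inl ⟨rfl, rfl, hauv⟩), hw1S, hwS⟩⟩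
              · obtain ⟨m, hm, hwm⟩ := coll k'' w2 v ht2
                rw [if_neg hw2u, if_neg (Ne.symm huv)] at hwm
                exact pullW v hwS (Ne.symm huv) m ⟨w2, ⟨hA2, hvS', memS' w2 ha2.2.2 hw2u⟩, hwm⟩
            · have hA1 : AA v w1 := tw_vOut hAu hAu' hirr huv haA hw1u
              obtain ⟨m, hm, hwm⟩ := coll k' w1 v ht1
              rw [if_neg hw1u, if_neg (Ne.symm huv)] at hwm
              exact pullW v hwS (Ne.symm huv) m ⟨w1, ⟨hA1, hvS', memS' w1 hw1S hw1u⟩, hwm⟩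
          · by_cases hw1u : w1 = u
            · rw [hw1u] at haA hw1S ht1
              have hAwv : AA w v := by
                rcases tw_uIn hAu hAu' hirr huv haA with ⟨h1, -⟩ | ⟨h, -, -⟩
                · exact absurd h1 hwv
                · exact h
              have hk' : 1 ≤ k' := walkLen_pos ht1 (fun e => hwu e.symm)
              obtain ⟨k'', rfl⟩ : ∃ k'', k' = k'' + 1 := ⟨k' - 1, by omega⟩
              obtain ⟨w2, ha2, ht2⟩ := ht1
              rcases tw_uOut hAu hAu' hirr huv ha2.1 with ⟨he2, -⟩ | ⟨hA2, hw2u, hw2v⟩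
              · rw [he2] at ht2
                obtain ⟨m, hm, hwm⟩ := coll k'' v w ht2
                rw [if_neg (Ne.symm huv), if_neg hwu] at hwm
                exact pullW w hwS hwu m ⟨v, ⟨hAwv, memS' w hwS hwu, hvS'⟩, hwm⟩
              · obtain ⟨m, hm, hwm⟩ := coll k'' w2 w ht2
                rw [if_neg hw2u, if_neg hwu] at hwm
                exact pullW w hwS hwu (m+1)
                  ⟨v, ⟨hAwv, memS' w hwS hwu, hvS'⟩, ⟨w2, ⟨hA2, hvS', memS' w2 ha2.2.2 hw2u⟩, hwm⟩⟩
            · have hA1 : AA w w1 := tw_nonU hAu hAu' hirr huv haA hwu hw1u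
              obtain ⟨m, hm, hwm⟩ := coll k' w1 w ht1
              rw [if_neg hw1u, if_neg hwu] at hwm
              exact pullW w hwS hwu m ⟨w1, ⟨hA1, memS' w hwS hwu, memS' w1 hw1S hw1u⟩, hwm⟩
      · have hSV : S ⊆ VV := by
          intro z hz
          rcases Finset.mem_insert.mp (hS hz) with h | h
          · exact absurd (by rw [← h]; exact hz) huS
          · exact h
        have hconv : ∀ a b, restrict (twinArc AA v u auv avu) S a b → restrict AA S a b := by
          intro a b hab
          exact ⟨tw_nonU hAu hAu' hirr huv hab.1 (fun e => huS (e ▸ hab.2.1))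
            (fun e => huS (e ▸ hab.2.2)), hab.2⟩
        obtain ⟨z, c1, c2⟩ := ih S hSV w k hk (walkLen_mono hconv k w w hw)
        exact ⟨z, ⟨Or.inl c1.1, c1.2⟩, ⟨Or.inl c2.1, c2.2⟩⟩

set_option maxHeartbeats 1000000 in
lemma dhMain {V : Finset ℕ} {A : ℕ → ℕ → Prop} (h : TwinDH V A) :
    ∀ S : Finset ℕ, S ⊆ V → ∀ x, x ∈ S → ∀ y, y ∈ S → ∀ n k,
      walkLen A n x y → walkLen (restrict A S) k x y →
      ∃ m, m ≤ n ∧ walkLen (restrict A S) m x y := by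
  induction h with
  | single p =>
      intro S hS x hx y hy n k hW hwit
      cases n with
      | zero => exact ⟨0, le_refl 0, hW⟩
      | succ n =>
          obtain ⟨w, ha, -⟩ := hW
          exact ha.elim
  | @union V₁ V₂ A₁ A₂ hd h1 h2 ih1 ih2 =>
      intro S hS x hx y hy n k hW hwit
      by_cases hxy : x = y
      · exact ⟨0, Nat.zero_le n, hxy⟩
      · rcases Finset.mem_union.mp (hS hx) with hxV | hxV
        · have hW1 := union_walkA_left hd (TwinDH.memV h1) (TwinDH.memV h2) n x y hxV hW
          have hyV : y ∈ V₁ := walk_endMem (TwinDH.memV h1) n x y hW1 hxV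
          have hwit1 := union_walk_left hd (TwinDH.memV h1) (TwinDH.memV h2) k x y hxV hwit
          obtain ⟨m, hm, wm⟩ := ih1 (S ∩ V₁) Finset.inter_subset_right x
            (Finset.mem_inter.mpr ⟨hx, hxV⟩) y (Finset.mem_inter.mpr ⟨hy, hyV⟩) n k hW1 hwit1
          refine ⟨m, hm, walkLen_mono ?_ m x y wm⟩
          intro a b hab
          exact ⟨Or.inl hab.1, (Finset.mem_inter.mp hab.2.1).1, (Finset.mem_inter.mp hab.2.2).1⟩
        · have hW2 := union_walkA_right hd (TwinDH.memV h1) (TwinDH.memV h2) n x y hxV hW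
          have hyV : y ∈ V₂ := walk_endMem (TwinDH.memV h2) n x y hW2 hxV
          have hwit2 := union_walk_right hd (TwinDH.memV h1) (TwinDH.memV h2) k x y hxV hwit
          obtain ⟨m, hm, wm⟩ := ih2 (S ∩ V₂) Finset.inter_subset_right x
            (Finset.mem_inter.mpr ⟨hx, hxV⟩) y (Finset.mem_inter.mpr ⟨hy, hyV⟩) n k hW2 hwit2
          refine ⟨m, hm, walkLen_mono ?_ m x y wm⟩
          intro a b hab
          exact ⟨Or.inr hab.1, (Finset.mem_inter.mp hab.2.1).1, (Finset.mem_inter.mp hab.2.2).1⟩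
  | @pendPlus VV AA a u ha hu hp ih =>
      intro S hS x hx y hy n k hW hwit
      have mV := TwinDH.memV hp
      have hau : a ≠ u := fun e => hu (by rw [← e]; exact ha)
      have hsub : S.erase u ⊆ VV := by
        intro z hz
        have hz' := Finset.mem_erase.mp hz
        rcases Finset.mem_insert.mp (hS hz'.2) with h | h
        · exact absurd h hz'.1
        · exact h
      have hmono : ∀ p q, restrict AA (S.erase u) p q →
          restrict (fun x y => AA x y ∨ (x = u ∧ y = a)) S p q := by
        intro p q hpq
        exact ⟨Or.inl hpq.1, (Finset.mem_erase.mp hpq.2.1).2, (Finset.mem_erase.mp hpq.2.2).2⟩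
      by_cases hxy : x = y
      · exact ⟨0, Nat.zero_le n, hxy⟩
      · by_cases hyu : y = u
        · rw [hyu] at hW
          have hn := pp_endU ha hu mV n x hW
          rw [hn] at hW
          exact absurd (show x = y from hW.trans hyu.symm) hxy
        · by_cases hxu : x = u
          · rw [hxu] at hW hwit hx ⊢
            have hyu' : u ≠ y := fun e => hxy (hxu.trans e)
            have hn : 1 ≤ n := walkLen_pos hW hyu'
            obtain ⟨n', rfl⟩ : ∃ n', n = n' + 1 := ⟨n - 1, by omega⟩
            obtain ⟨w, haw, htw⟩ := hW
            have hwa : w = a := by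
              rcases haw with h | ⟨-, h2⟩
              · exact absurd (mV _ _ h).1 hu
              · exact h2
            rw [hwa] at htw
            have hk1 : 1 ≤ k := walkLen_pos hwit hyu'
            obtain ⟨k', rfl⟩ : ∃ k', k = k' + 1 := ⟨k - 1, by omega⟩
            obtain ⟨w', haw', htw'⟩ := hwit
            have hwa' : w' = a := by
              rcases haw'.1 with h | ⟨-, h2⟩
              · exact absurd (mV _ _ h).1 hu
              · exact h2
            rw [hwa'] at htw' haw'
            have haS : a ∈ S := haw'.2.2
            by_cases hay : a = y
            · exact ⟨1, hn, ⟨a, ⟨Or.inr ⟨rfl, rfl⟩, hx, haS⟩, hay⟩⟩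
            · have htwA := pp_strip ha hu mV n' a y hau htw
              have htw'' := pp_strip' ha hu mV k' a y hau htw'
              obtain ⟨m, hm, wm⟩ := ih (S.erase u) hsub a (Finset.mem_erase.mpr ⟨hau, haS⟩)
                y (Finset.mem_erase.mpr ⟨hyu, hy⟩) n' k' htwA htw''
              exact ⟨m + 1, Nat.succ_le_succ hm, ⟨a, ⟨Or.inr ⟨rfl, rfl⟩, hx, haS⟩,
                walkLen_mono hmono m a y wm⟩⟩
          · have hWA := pp_strip ha hu mV n x y hxu hW
            have hwit' := pp_strip' ha hu mV k x y hxu hwit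
            obtain ⟨m, hm, wm⟩ := ih (S.erase u) hsub x (Finset.mem_erase.mpr ⟨hxu, hx⟩)
              y (Finset.mem_erase.mpr ⟨hyu, hy⟩) n k hWA hwit'
            exact ⟨m, hm, walkLen_mono hmono m x y wm⟩
  | @pendMinus VV AA a u ha hu hp ih =>
      intro S hS x hx y hy n k hW hwit
      have mV := TwinDH.memV hp
      have hau : a ≠ u := fun e => hu (by rw [← e]; exact ha)
      have hsub : S.erase u ⊆ VV := by
        intro z hz
        have hz' := Finset.mem_erase.mp hz
        rcases Finset.mem_insert.mp (hS hz'.2) with h | h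
        · exact absurd h hz'.1
        · exact h
      have hmono : ∀ p q, restrict AA (S.erase u) p q →
          restrict (fun x y => AA x y ∨ (x = a ∧ y = u)) S p q := by
        intro p q hpq
        exact ⟨Or.inl hpq.1, (Finset.mem_erase.mp hpq.2.1).2, (Finset.mem_erase.mp hpq.2.2).2⟩
      by_cases hxy : x = y
      · exact ⟨0, Nat.zero_le n, hxy⟩
      · by_cases hxu : x = u
        · rw [hxu] at hW
          have hn : 1 ≤ n := walkLen_pos hW (fun e => hxy (hxu.trans e))
          obtain ⟨n', rfl⟩ : ∃ n', n = n' + 1 := ⟨n - 1, by omega⟩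
          obtain ⟨w, haw, -⟩ := hW
          exact absurd haw (pm_noOut ha hu mV w)
        · by_cases hyu : y = u
          · rw [hyu] at hW hwit hy ⊢
            have hn : 1 ≤ n := walkLen_pos hW hxu
            obtain ⟨n', rfl⟩ : ∃ n', n = n' + 1 := ⟨n - 1, by omega⟩
            obtain ⟨p, hpre, hlast⟩ := walkLen_last n' x u hW
            have hpa : p = a := by
              rcases hlast with h | ⟨h1, -⟩
              · exact absurd (mV _ _ h).2 hu
              · exact h1
            rw [hpa] at hpre
            have hk1 : 1 ≤ k := walkLen_pos hwit hxu
            obtain ⟨k', rfl⟩ : ∃ k', k = k' + 1 := ⟨k - 1, by omega⟩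
            obtain ⟨p', hpre', hlast'⟩ := walkLen_last k' x u hwit
            have hpa' : p' = a := by
              rcases hlast'.1 with h | ⟨h1, -⟩
              · exact absurd (mV _ _ h).2 hu
              · exact h1
            rw [hpa'] at hpre' hlast'
            have haS : a ∈ S := hlast'.2.1
            by_cases hxa : x = a
            · exact ⟨1, hn, ⟨u, ⟨Or.inr ⟨hxa, rfl⟩, hx, hy⟩, rfl⟩⟩
            · have hpreA := pm_strip ha hu mV n' x a hxu hau hpre
              have hpre'' := pm_strip' ha hu mV k' x a hxu hau hpre'
              obtain ⟨m, hm, wm⟩ := ih (S.erase u) hsub x (Finset.mem_erase.mpr ⟨hxu, hx⟩)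
                a (Finset.mem_erase.mpr ⟨hau, haS⟩) n' k' hpreA hpre''
              exact ⟨m + 1, Nat.succ_le_succ hm, walkLen_snoc m x a u
                (walkLen_mono hmono m x a wm) ⟨Or.inr ⟨rfl, rfl⟩, haS, hy⟩⟩
          · have hWA := pm_strip ha hu mV n x y hxu hyu hW
            have hwit' := pm_strip' ha hu mV k x y hxu hyu hwit
            obtain ⟨m, hm, wm⟩ := ih (S.erase u) hsub x (Finset.mem_erase.mpr ⟨hxu, hx⟩)
              y (Finset.mem_erase.mpr ⟨hyu, hy⟩) n k hWA hwit'
            exact ⟨m, hm, walkLen_mono hmono m x y wm⟩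
  | @twin VV AA v u auv avu hv hu hp ih =>
      intro S hS x hx y hy n k hW hwit
      have mV := TwinDH.memV hp
      have hAu : ∀ z, ¬ AA u z := fun z hz => hu (mV _ _ hz).1
      have hAu' : ∀ z, ¬ AA z u := fun z hz => hu (mV _ _ hz).2
      have hirr := TwinDH.notRefl hp
      have huv : u ≠ v := fun e => hu (by rw [e]; exact hv)
      have hS' : insert v (S.erase u) ⊆ VV := by
        intro z hz
        rcases Finset.mem_insert.mp hz with h | h
        · rw [h]; exact hv
        · have hz' := Finset.mem_erase.mp h
          rcases Finset.mem_insert.mp (hS hz'.2) with h2 | h2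
          · exact absurd h2 hz'.1
          · exact h2
      have memS' : ∀ z, z ∈ S → z ≠ u → z ∈ insert v (S.erase u) := fun z hz hzu =>
        Finset.mem_insert_of_mem (Finset.mem_erase.mpr ⟨hzu, hz⟩)
      have hvS' : v ∈ insert v (S.erase u) := Finset.mem_insert_self _ _
      by_cases hxy : x = y
      · exact ⟨0, Nat.zero_le n, hxy⟩
      · by_cases hsw1 : x = u ∧ y = v
        · obtain ⟨hx1, hy1⟩ := hsw1
          rw [hx1] at hW hwit hx ⊢
          rw [hy1] at hW hwit hy ⊢
          by_cases hauv : auv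
          · exact ⟨1, walkLen_pos hW huv, ⟨v, ⟨Or.inr (Or.inl ⟨rfl, rfl, hauv⟩), hx, hy⟩, rfl⟩⟩
          · have hn2 : 2 ≤ n := by
              cases n with
              | zero => exact absurd (show u = v from hW) huv
              | succ n =>
                  cases n with
                  | zero =>
                      obtain ⟨w, haw, h0⟩ := hW
                      rw [show w = v from h0] at haw
                      exact absurd (tw_uv hAu hAu' hirr huv haw) hauv
                  | succ n => omega
            have hk1 : 1 ≤ k := walkLen_pos hwit huv
            obtain ⟨k', rfl⟩ : ∃ k', k = k' + 1 := ⟨k - 1, by omega⟩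
            obtain ⟨z1, ha1, ht1⟩ := hwit
            rcases tw_uOut hAu hAu' hirr huv ha1.1 with ⟨he, hauv'⟩ | ⟨hA1, hz1u, hz1v⟩
            · exact absurd hauv' hauv
            · have wcl : walkLen (restrict (twinArc AA v u auv avu) S) (k' + 1) v v :=
                ⟨z1, ⟨Or.inl hA1, hy, ha1.2.2⟩, ht1⟩
              obtain ⟨z, c1, c2⟩ := twoCycle (TwinDH.twin v u auv avu hv hu hp) S hS v (k' + 1)
                (Nat.succ_le_succ (Nat.zero_le _)) wcl
              have hzu : z ≠ u := by
                intro e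
                rw [e] at c2
                exact hauv (tw_uv hAu hAu' hirr huv c2.1)
              have hAvz : AA v z := tw_vOut hAu hAu' hirr huv c1.1 hzu
              exact ⟨2, hn2, ⟨z, ⟨Or.inr (Or.inr (Or.inr (Or.inl ⟨rfl, hAvz⟩))), hx, c1.2.2⟩,
                ⟨v, c2, rfl⟩⟩⟩
        · by_cases hsw2 : x = v ∧ y = u
          · obtain ⟨hx1, hy1⟩ := hsw2
            rw [hx1] at hW hwit hx ⊢
            rw [hy1] at hW hwit hy ⊢
            by_cases havu : avu
            · exact ⟨1, walkLen_pos hW (Ne.symm huv),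
                ⟨u, ⟨Or.inr (Or.inr (Or.inl ⟨rfl, rfl, havu⟩)), hx, hy⟩, rfl⟩⟩
            · have hn2 : 2 ≤ n := by
                cases n with
                | zero => exact absurd (show v = u from hW) (Ne.symm huv)
                | succ n =>
                    cases n with
                    | zero =>
                        obtain ⟨w, haw, h0⟩ := hW
                        rw [show w = u from h0] at haw
                        exact absurd (tw_vu hAu hAu' hirr huv haw) havu
                    | succ n => omega
              have hk1 : 1 ≤ k := walkLen_pos hwit (Ne.symm huv)
              obtain ⟨k', rfl⟩ : ∃ k', k = k' + 1 := ⟨k - 1, by omega⟩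
              obtain ⟨p, hpre, hlast⟩ := walkLen_last k' v u hwit
              rcases tw_uIn hAu hAu' hirr huv hlast.1 with ⟨he, havu'⟩ | ⟨hApv, hpu, hpv⟩
              · exact absurd havu' havu
              · have wcl : walkLen (restrict (twinArc AA v u auv avu) S) (k' + 1) v v :=
                  walkLen_snoc k' v p v hpre ⟨Or.inl hApv, hlast.2.1, hx⟩
                obtain ⟨z, c1, c2⟩ := twoCycle (TwinDH.twin v u auv avu hv hu hp) S hS v (k' + 1)
                  (Nat.succ_le_succ (Nat.zero_le _)) wcl
                have hzu : z ≠ u := by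
                  intro e
                  rw [e] at c1
                  exact havu (tw_vu hAu hAu' hirr huv c1.1)
                have hAzv : AA z v := tw_vIn hAu hAu' hirr huv c2.1 hzu
                exact ⟨2, hn2, ⟨z, c1,
                  ⟨u, ⟨Or.inr (Or.inr (Or.inr (Or.inr ⟨rfl, hAzv⟩))), c1.2.2, hy⟩, rfl⟩⟩⟩
          · have hσ : (if x = u then v else x) ≠ (if y = u then v else y) := by
              by_cases hxu : x = u <;> by_cases hyu : y = u
              · rw [hxu, hyu] at hxy; exact absurd rfl hxy
              · rw [if_pos hxu, if_neg hyu]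
                intro e; exact hsw1 ⟨hxu, e.symm⟩
              · rw [if_neg hxu, if_pos hyu]
                intro e; exact hsw2 ⟨e, hyu⟩
              · rw [if_neg hxu, if_neg hyu]; exact hxy
            obtain ⟨n0, hn0, hW0⟩ := tw_collapse hAu hAu' hirr huv n x y hW
            by_cases huS : u ∈ S
            · obtain ⟨k0, hk0, hwit0⟩ :=
                tw_collapse' (auv := auv) (avu := avu) hAu hAu' hirr huv (S := S) k x y hwit
              have hσx : (if x = u then v else x) ∈ insert v (S.erase u) := by
                by_cases hxu : x = u
                · rw [if_pos hxu]; exact hvS'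
                · rw [if_neg hxu]; exact memS' x hx hxu
              have hσy : (if y = u then v else y) ∈ insert v (S.erase u) := by
                by_cases hyu : y = u
                · rw [if_pos hyu]; exact hvS'
                · rw [if_neg hyu]; exact memS' y hy hyu
              obtain ⟨m, hm, wm⟩ := ih (insert v (S.erase u)) hS' _ hσx _ hσy n0 k0 hW0 hwit0
              refine ⟨m, le_trans hm hn0, ?_⟩
              by_cases hvS : v ∈ S
              · have hS'S : ∀ z, z ∈ insert v (S.erase u) → z ∈ S := by
                  intro z hz
                  rcases Finset.mem_insert.mp hz with h | h
                  · rw [h]; exact hvS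
                  · exact (Finset.mem_erase.mp h).2
                have liftA : ∀ p q, restrict AA (insert v (S.erase u)) p q →
                    restrict (twinArc AA v u auv avu) S p q := fun p q hpq =>
                  ⟨Or.inl hpq.1, hS'S _ hpq.2.1, hS'S _ hpq.2.2⟩
                by_cases hxu : x = u
                · have hyu : y ≠ u := fun e => hxy (hxu.trans e.symm)
                  rw [if_pos hxu, if_neg hyu] at wm hσ
                  have hm1 : 1 ≤ m := walkLen_pos wm hσ
                  obtain ⟨m', rfl⟩ : ∃ m', m = m' + 1 := ⟨m - 1, by omega⟩
                  obtain ⟨w1, haw, htw⟩ := wm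
                  rw [hxu]
                  exact ⟨w1, ⟨Or.inr (Or.inr (Or.inr (Or.inl ⟨rfl, haw.1⟩))), huS,
                    hS'S _ haw.2.2⟩, walkLen_mono liftA m' w1 y htw⟩
                · by_cases hyu : y = u
                  · rw [if_neg hxu, if_pos hyu] at wm hσ
                    have hm1 : 1 ≤ m := walkLen_pos wm hσ
                    obtain ⟨m', rfl⟩ : ∃ m', m = m' + 1 := ⟨m - 1, by omega⟩
                    obtain ⟨p, hpre, hlast⟩ := walkLen_last m' x v wm
                    rw [hyu]
                    exact walkLen_snoc m' x p u (walkLen_mono liftA m' x p hpre)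
                      ⟨Or.inr (Or.inr (Or.inr (Or.inr ⟨rfl, hlast.1⟩))), hS'S _ hlast.2.1, huS⟩
                  · rw [if_neg hxu, if_neg hyu] at wm
                    exact walkLen_mono liftA m x y wm
              · have hS'noV : ∀ z, z ∈ insert v (S.erase u) → z ≠ v → z ∈ S := by
                  intro z hz hzv
                  rcases Finset.mem_insert.mp hz with h | h
                  · exact absurd h hzv
                  · exact (Finset.mem_erase.mp h).2
                have liftB : ∀ mm p q, walkLen (restrict AA (insert v (S.erase u))) mm p q →
                    walkLen (restrict (twinArc AA v u auv avu) S) mm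
                      (if p = v then u else p) (if q = v then u else q) := by
                  intro mm
                  induction mm with
                  | zero =>
                      intro p q hpq
                      rw [show p = q from hpq]
                      exact rfl
                  | succ mm ihm =>
                      intro p q hpq
                      obtain ⟨w1, ⟨hA1, hpS', hw1S'⟩, htw⟩ := hpq
                      refine ⟨if w1 = v then u else w1, ?_, ihm w1 q htw⟩
                      by_cases hpv : p = v
                      · have hw1v : w1 ≠ v := fun e => hirr v (by rw [hpv, e] at hA1; exact hA1)
                        rw [if_pos hpv, if_neg hw1v]
                        refine ⟨Or.inr (Or.inr (Or.inr (Or.inl ⟨rfl, ?_⟩))), huS,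
                          hS'noV _ hw1S' hw1v⟩
                        rw [← hpv]; exact hA1
                      · by_cases hw1v : w1 = v
                        · rw [if_neg hpv, if_pos hw1v]
                          refine ⟨Or.inr (Or.inr (Or.inr (Or.inr ⟨rfl, ?_⟩))),
                            hS'noV _ hpS' hpv, huS⟩
                          rw [← hw1v]; exact hA1
                        · rw [if_neg hpv, if_neg hw1v]
                          exact ⟨Or.inl hA1, hS'noV _ hpS' hpv, hS'noV _ hw1S' hw1v⟩
                have key := liftB m _ _ wm
                have hback : ∀ z, z ∈ S →
                    (if (if z = u then v else z) = v then u else (if z = u then v else z)) = z := by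
                  intro z hz
                  by_cases hzu : z = u
                  · rw [if_pos hzu, if_pos rfl, hzu]
                  · rw [if_neg hzu, if_neg (fun e => hvS (by rw [← e]; exact hz))]
                rw [hback x hx, hback y hy] at key
                exact key
            · have hSV : S ⊆ VV := by
                intro z hz
                rcases Finset.mem_insert.mp (hS hz) with h | h
                · exact absurd (by rw [← h]; exact hz) huS
                · exact h
              have hconv : ∀ a b, restrict (twinArc AA v u auv avu) S a b →
                  restrict AA S a b := by
                intro a b hab
                exact ⟨tw_nonU hAu hAu' hirr huv hab.1 (fun e => huS (e ▸ hab.2.1))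
                  (fun e => huS (e ▸ hab.2.2)), hab.2⟩
              have hxu : x ≠ u := fun e => huS (e ▸ hx)
              have hyu : y ≠ u := fun e => huS (e ▸ hy)
              rw [if_neg hxu, if_neg hyu] at hW0
              obtain ⟨m, hm, wm⟩ := ih S hSV x hx y hy n0 k hW0
                (walkLen_mono hconv k x y hwit)
              exact ⟨m, le_trans hm hn0,
                walkLen_mono (fun a b hab => ⟨Or.inl hab.1, hab.2⟩) m x y wm⟩

theorem stmt_7 (V : Finset ℕ) (A : ℕ → ℕ → Prop) (h : TwinDH V A)
    (S : Finset ℕ) (hS : S ⊆ V) (u v : ℕ) (hu : u ∈ S) (hv : v ∈ S)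
    (hreach : Reach (restrict A S) u v) :
    ddist (restrict A S) u v = ddist A u v := by
  obtain ⟨k, hk⟩ := hreach
  have hsub : ∀ a b, restrict A S a b → A a b := fun a b hab => hab.1
  have hkA : walkLen A k u v := walkLen_mono hsub k u v hk
  have hmem : ddist A u v ∈ {n | walkLen A n u v} := Nat.sInf_mem ⟨k, hkA⟩
  obtain ⟨m, hm, hwm⟩ := dhMain h S hS u hu v hv (ddist A u v) k hmem hk
  have h1 : ddist (restrict A S) u v ≤ ddist A u v :=
    le_trans (Nat.sInf_le hwm) hm
  have h2 : ddist A u v ≤ ddist (restrict A S) u v := by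
    have hmem2 : ddist (restrict A S) u v ∈ {n | walkLen (restrict A S) n u v} :=
      Nat.sInf_mem ⟨k, hk⟩
    exact Nat.sInf_le (walkLen_mono hsub _ u v hmem2)
  exact le_antisymm h1 h2
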